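/- arXiv:0907.3415 — 3 statements merged into one kernel-verified Lean document; each statement's English description precedes it below -/
import Mathlib

section
/- If f : ℝ → ℝ is twice differentiable and satisfies (f')² − f·f'' − 1/12 = 0 and 12(f')² + k²f² = 1 on an open interval for a real constant k ≠ 0, then there exist real constants A, B with (A² + B²)k² = 1 such that f(t) = A·cos(k t/√12) + B·sin(k t/√12) on that interval. -/
lemma const_on_Ioo {a b : ℝ} (h : ℝ → ℝ)
    (hd : ∀ t ∈ Set.Ioo a b, HasDerivAt h 0 t) {x y : ℝ}
    (hx : x ∈ Set.Ioo a b) (hy : y ∈ Set.Ioo a b) : h x = h y := by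
  apply (convex_Ioo a b).is_const_of_fderivWithin_eq_zero (𝕜 := ℝ)
    (fun t ht => (hd t ht).differentiableAt.differentiableWithinAt) _ hx hy
  intro t ht
  rw [fderivWithin_eq_fderiv (isOpen_Ioo.uniqueDiffOn t ht) (hd t ht).differentiableAt,
    (hd t ht).hasFDerivAt.fderiv]
  ext; simp

theorem stmt_0 (a b k : ℝ) (hk : k ≠ 0) (f f' f'' : ℝ → ℝ)
    (hf : ∀ t ∈ Set.Ioo a b, HasDerivAt f (f' t) t)
    (hf' : ∀ t ∈ Set.Ioo a b, HasDerivAt f' (f'' t) t)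
    (hode1 : ∀ t ∈ Set.Ioo a b, (f' t) ^ 2 - f t * f'' t - 1 / 12 = 0)
    (hode2 : ∀ t ∈ Set.Ioo a b, 12 * (f' t) ^ 2 + k ^ 2 * (f t) ^ 2 = 1) :
    ∃ A B : ℝ, (A ^ 2 + B ^ 2) * k ^ 2 = 1 ∧
      ∀ t ∈ Set.Ioo a b,
        f t = A * Real.cos (k * t / Real.sqrt 12) + B * Real.sin (k * t / Real.sqrt 12) := by
  rcases Set.eq_empty_or_nonempty (Set.Ioo a b) with he | ⟨t0, ht0⟩
  · exact ⟨1/k, 0, by field_simp; norm_num, fun t ht => absurd (he ▸ ht) (Set.notMem_empty t)⟩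
  set ω : ℝ := k / Real.sqrt 12 with hω
  have hs12 : Real.sqrt 12 ^ 2 = 12 := Real.sq_sqrt (by norm_num)
  have hs12' : Real.sqrt 12 ≠ 0 := by positivity
  have hωne : ω ≠ 0 := div_ne_zero hk hs12'
  have hω2 : ω ^ 2 = k ^ 2 / 12 := by rw [hω, div_pow, hs12]
  -- key: 12 f'' + k² f = 0 on Ioo
  have key : ∀ t ∈ Set.Ioo a b, 12 * f'' t + k ^ 2 * f t = 0 := by
    intro t ht
    have hgd : HasDerivAt (fun t => 12 * (f' t) ^ 2 + k ^ 2 * (f t) ^ 2)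
        (12 * (2 * f' t * f'' t) + k ^ 2 * (2 * f t * f' t)) t := by
      have := (((hf' t ht).pow 2).const_mul 12).add (((hf t ht).pow 2).const_mul (k^2))
      refine this.congr_deriv ?_; push_cast; ring
    have hconst : HasDerivAt (fun t => 12 * (f' t) ^ 2 + k ^ 2 * (f t) ^ 2) 0 t := by
      have : (fun _ : ℝ => (1:ℝ)) =ᶠ[nhds t] fun t => 12 * (f' t) ^ 2 + k ^ 2 * (f t) ^ 2 := by
        filter_upwards [isOpen_Ioo.mem_nhds ht] with s hs using (hode2 s hs).symm
      exact (hasDerivAt_const t 1).congr_of_eventuallyEq this.symm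
    have hzero : 12 * (2 * f' t * f'' t) + k ^ 2 * (2 * f t * f' t) = 0 :=
      hgd.unique hconst
    by_cases hfp : f' t = 0
    · -- then f t ≠ 0 by ode1, and f·(12 f'' + k² f) = 0 from ode1+ode2
      have h1 := hode1 t ht
      have h2 := hode2 t ht
      have hft : f t ≠ 0 := by
        intro h0; rw [hfp, h0] at h1; norm_num at h1
      have : f t * (12 * f'' t + k ^ 2 * f t) = 0 := by nlinarith
      rcases mul_eq_zero.1 this with h | h
      · exact absurd h hft
      · exact h
    · have : 2 * f' t * (12 * f'' t + k ^ 2 * f t) = 0 := by ring_nf; ring_nf at hzero; linarith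
      have := mul_eq_zero.1 this
      rcases this with h | h
      · exact absurd h (by simpa using hfp)
      · exact h
  have key' : ∀ t ∈ Set.Ioo a b, f'' t = -(ω ^ 2) * f t := by
    intro t ht
    have := key t ht
    rw [hω2]; linarith
  -- constants
  set A := f t0 * Real.cos (ω * t0) - (f' t0 / ω) * Real.sin (ω * t0) with hA
  set B := f t0 * Real.sin (ω * t0) + (f' t0 / ω) * Real.cos (ω * t0) with hB
  have hcosd : ∀ t : ℝ, HasDerivAt (fun t => Real.cos (ω * t)) (-Real.sin (ω * t) * ω) t := by
    intro t
    exact (Real.hasDerivAt_cos (ω * t)).comp t (by simpa using (hasDerivAt_id t).const_mul ω)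
  have hsind : ∀ t : ℝ, HasDerivAt (fun t => Real.sin (ω * t)) (Real.cos (ω * t) * ω) t := by
    intro t
    exact (Real.hasDerivAt_sin (ω * t)).comp t (by simpa using (hasDerivAt_id t).const_mul ω)
  have hAd : ∀ t ∈ Set.Ioo a b, HasDerivAt
      (fun t => f t * Real.cos (ω * t) - (f' t / ω) * Real.sin (ω * t)) 0 t := by
    intro t ht
    have := ((hf t ht).mul (hcosd t)).sub (((hf' t ht).div_const ω).mul (hsind t))
    refine this.congr_deriv ?_
    rw [key' t ht]; field_simp; ring
  have hBd : ∀ t ∈ Set.Ioo a b, HasDerivAt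
      (fun t => f t * Real.sin (ω * t) + (f' t / ω) * Real.cos (ω * t)) 0 t := by
    intro t ht
    have := ((hf t ht).mul (hsind t)).add (((hf' t ht).div_const ω).mul (hcosd t))
    refine this.congr_deriv ?_
    rw [key' t ht]; field_simp; ring
  refine ⟨A, B, ?_, ?_⟩
  · have h2 := hode2 t0 ht0
    have hpy : Real.cos (ω * t0) ^ 2 + Real.sin (ω * t0) ^ 2 = 1 := by
      rw [add_comm]; exact Real.sin_sq_add_cos_sq _
    have hAB : A ^ 2 + B ^ 2 = f t0 ^ 2 + (f' t0 / ω) ^ 2 := by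
      rw [hA, hB]; nlinarith [hpy]
    have h3 : (f' t0 / ω) ^ 2 * k ^ 2 = 12 * f' t0 ^ 2 := by
      rw [div_pow, hω2]; field_simp
    rw [hAB, add_mul, h3]
    linarith
  · intro t ht
    have hAc : f t * Real.cos (ω * t) - (f' t / ω) * Real.sin (ω * t) = A := by
      exact const_on_Ioo _ hAd ht ht0
    have hBc : f t * Real.sin (ω * t) + (f' t / ω) * Real.cos (ω * t) = B := by
      exact const_on_Ioo _ hBd ht ht0
    have hpy : Real.cos (ω * t) ^ 2 + Real.sin (ω * t) ^ 2 = 1 := by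
      rw [add_comm]; exact Real.sin_sq_add_cos_sq _
    have hωt : k * t / Real.sqrt 12 = ω * t := by rw [hω]; ring
    rw [hωt, ← hAc, ← hBc]; linear_combination (-(f t)) * hpy
end

section
/- Suppose functions f, h, a₁, a₂, a₃ : I → ℝ on an open interval satisfy: a₁ + √12·f' = 0, h = (2/√3)·f, aᵢ' − (f'/f)·aᵢ − (h/(4f²))·δ_{i1} = 0 for i = 1,2,3, and a₁² + a₂² + a₃² = 1 with f > 0. Then f satisfies (f')² − f·f'' − 1/12 = 0 and there exist constants k, k̃ with a₂ = k·f and a₃ = k̃·f on I, and 12(f')² + (k² + k̃²)f² = 1. -/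
lemma const_on_Ioo_s5 {x y : ℝ} {g : ℝ → ℝ}
    (hg : ∀ t ∈ Set.Ioo x y, HasDerivAt g 0 t) {s t : ℝ}
    (hs : s ∈ Set.Ioo x y) (ht : t ∈ Set.Ioo x y) : g s = g t := by
  have := (convex_Ioo x y).norm_image_sub_le_of_norm_hasDerivWithin_le
    (f' := fun _ => (0 : ℝ)) (C := 0)
    (fun u hu => (hg u hu).hasDerivWithinAt) (fun u _ => by simp) ht hs
  have : ‖g s - g t‖ ≤ 0 := by simpa using this
  have : g s - g t = 0 := by
    have := norm_nonneg (g s - g t)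
    have h0 : ‖g s - g t‖ = 0 := le_antisymm ‹‖g s - g t‖ ≤ 0› this
    exact norm_eq_zero.mp h0
  linarith

theorem stmt_5 (x y : ℝ) (f f' f'' h a₁ a₂ a₃ a₁' a₂' a₃' : ℝ → ℝ)
    (hfd : ∀ t ∈ Set.Ioo x y, HasDerivAt f (f' t) t)
    (hfd' : ∀ t ∈ Set.Ioo x y, HasDerivAt f' (f'' t) t)
    (ha₁d : ∀ t ∈ Set.Ioo x y, HasDerivAt a₁ (a₁' t) t)
    (ha₂d : ∀ t ∈ Set.Ioo x y, HasDerivAt a₂ (a₂' t) t)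
    (ha₃d : ∀ t ∈ Set.Ioo x y, HasDerivAt a₃ (a₃' t) t)
    (hfpos : ∀ t ∈ Set.Ioo x y, 0 < f t)
    (heq1 : ∀ t ∈ Set.Ioo x y, a₁ t + Real.sqrt 12 * f' t = 0)
    (heqh : ∀ t ∈ Set.Ioo x y, h t = (2 / Real.sqrt 3) * f t)
    (heq2 : ∀ t ∈ Set.Ioo x y,
      a₁' t - (f' t / f t) * a₁ t - h t / (4 * (f t) ^ 2) = 0)
    (heq3 : ∀ t ∈ Set.Ioo x y, a₂' t - (f' t / f t) * a₂ t = 0)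
    (heq4 : ∀ t ∈ Set.Ioo x y, a₃' t - (f' t / f t) * a₃ t = 0)
    (hsum : ∀ t ∈ Set.Ioo x y, (a₁ t) ^ 2 + (a₂ t) ^ 2 + (a₃ t) ^ 2 = 1) :
    (∀ t ∈ Set.Ioo x y, (f' t) ^ 2 - f t * f'' t - 1 / 12 = 0) ∧
      ∃ k k' : ℝ, (∀ t ∈ Set.Ioo x y, a₂ t = k * f t ∧ a₃ t = k' * f t) ∧
        ∀ t ∈ Set.Ioo x y, 12 * (f' t) ^ 2 + (k ^ 2 + k' ^ 2) * (f t) ^ 2 = 1 := by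
  have s12 : Real.sqrt 12 * Real.sqrt 12 = 12 := Real.mul_self_sqrt (by norm_num)
  have s3 : Real.sqrt 3 * Real.sqrt 3 = 3 := Real.mul_self_sqrt (by norm_num)
  have s3pos : (0:ℝ) < Real.sqrt 3 := Real.sqrt_pos.mpr (by norm_num)
  have s12eq : Real.sqrt 12 = 2 * Real.sqrt 3 := by
    rw [show (12:ℝ) = 4 * 3 by norm_num, Real.sqrt_mul (by norm_num),
      show Real.sqrt 4 = 2 by
        rw [show (4:ℝ) = 2 ^ 2 by norm_num]; exact Real.sqrt_sq (by norm_num)]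
  -- a₁ = -√12 f', and a₁' : from heq1 derivative
  have ha1 : ∀ t ∈ Set.Ioo x y, a₁ t = -(Real.sqrt 12) * f' t := fun t ht => by
    have := heq1 t ht; linarith
  -- a₁' = -√12 f'' on Ioo: since a₁ agrees with -√12 f' on open set
  have ha1' : ∀ t ∈ Set.Ioo x y, a₁' t = -(Real.sqrt 12) * f'' t := by
    intro t ht
    have hda : HasDerivAt a₁ (-(Real.sqrt 12) * f'' t) t := by
      have h2 : HasDerivAt (fun u => -(Real.sqrt 12) * f' u) (-(Real.sqrt 12) * f'' t) t :=
        (hfd' t ht).const_mul _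
      refine h2.congr_of_eventuallyEq ?_
      filter_upwards [isOpen_Ioo.mem_nhds ht] with u hu using ha1 u hu
    exact (ha₁d t ht).unique hda
  -- first part
  have part1 : ∀ t ∈ Set.Ioo x y, (f' t) ^ 2 - f t * f'' t - 1 / 12 = 0 := by
    intro t ht
    have hf0 := (hfpos t ht).ne'
    have e2 := heq2 t ht
    rw [ha1 t ht, ha1' t ht, heqh t ht] at e2
    have hfne : f t ≠ 0 := hf0
    field_simp at e2
    have h6 : Real.sqrt 3 * Real.sqrt 12 = 6 := by rw [s12eq]; nlinarith [s3]
    have e3 : 24 * f t ^ 2 * (f' t ^ 2 - f t * f'' t) = 2 * f t ^ 2 := by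
      linear_combination f t ^ 2 * e2 - 4 * f t ^ 2 * (f' t ^ 2 - f t * f'' t) * h6
    have hf2 : (0:ℝ) < f t ^ 2 := pow_pos (hfpos t ht) 2
    nlinarith [e3, hf2]
  refine ⟨part1, ?_⟩
  rcases Set.eq_empty_or_nonempty (Set.Ioo x y) with he | ⟨t₀, ht₀⟩
  · exact ⟨0, 0, fun t ht => by rw [he] at ht; exact absurd ht (Set.notMem_empty t),
      fun t ht => by rw [he] at ht; exact absurd ht (Set.notMem_empty t)⟩
  · have hconst : ∀ (a a' : ℝ → ℝ), (∀ t ∈ Set.Ioo x y, HasDerivAt a (a' t) t) →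
        (∀ t ∈ Set.Ioo x y, a' t - (f' t / f t) * a t = 0) →
        ∀ t ∈ Set.Ioo x y, a t / f t = a t₀ / f t₀ := by
      intro a a' had heq t ht
      have hd0 : ∀ u ∈ Set.Ioo x y, HasDerivAt (fun v => a v / f v) 0 u := by
        intro u hu
        have hfne : f u ≠ 0 := (hfpos u hu).ne'
        have := (had u hu).div (hfd u hu) hfne
        have he : a' u = (f' u / f u) * a u := by have := heq u hu; linarith
        refine this.congr_deriv ?_
        rw [he]; field_simp; ring
      exact const_on_Ioo_s5 hd0 ht ht₀
    refine ⟨a₂ t₀ / f t₀, a₃ t₀ / f t₀, ?_, ?_⟩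
    · intro t ht
      have h2 := hconst a₂ a₂' ha₂d heq3 t ht
      have h3 := hconst a₃ a₃' ha₃d heq4 t ht
      have hfne : f t ≠ 0 := (hfpos t ht).ne'
      constructor
      · field_simp at h2 ⊢; linarith
      · field_simp at h3 ⊢; linarith
    · intro t ht
      have h2 := hconst a₂ a₂' ha₂d heq3 t ht
      have h3 := hconst a₃ a₃' ha₃d heq4 t ht
      have hfne : f t ≠ 0 := (hfpos t ht).ne'
      have hs := hsum t ht
      rw [ha1 t ht] at hs
      have ha2 : a₂ t = (a₂ t₀ / f t₀) * f t := by field_simp at h2 ⊢; linarith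
      have ha3 : a₃ t = (a₃ t₀ / f t₀) * f t := by field_simp at h3 ⊢; linarith
      rw [ha2, ha3] at hs
      nlinarith [hs, s12]
end

section
/- Let V be a finite-dimensional real inner product space with compatible complex structure J (J orthogonal, J² = −id) and let h : V × V → W be a symmetric bilinear map into an inner product space W satisfying h(X, JY) + h(JX, Y) = 2·J'·h(X,Y) for a complex structure J' on W compatible with the inner product of W. If v ∈ V is a unit vector maximizing ‖h(w,w)‖² over unit vectors w, then for every w ∈ V orthogonal to v, ⟨h(v,v), h(v,w)⟩ = 0. -/
open scoped RealInnerProductSpace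

set_option maxHeartbeats 1000000 in
private lemma aux_key (V W : Type*)
    [NormedAddCommGroup V] [InnerProductSpace ℝ V] [FiniteDimensional ℝ V]
    [NormedAddCommGroup W] [InnerProductSpace ℝ W] [FiniteDimensional ℝ W]
    (h : V →ₗ[ℝ] V →ₗ[ℝ] W)
    (hsym : ∀ X Y : V, h X Y = h Y X)
    (v : V) (hv : ‖v‖ = 1)
    (hmax : ∀ w : V, ‖w‖ = 1 → ‖h w w‖ ^ 2 ≤ ‖h v v‖ ^ 2)
    (w : V) (hw : ‖w‖ = 1) (hvw : ⟪v, w⟫ = 0) : ⟪h v v, h v w⟫ = 0 := by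
  -- continuous bilinear version of h
  set B1 : V →ₗ[ℝ] (V →L[ℝ] W) :=
    { toFun := fun x => (h x).toContinuousLinearMap
      map_add' := by intro x y; ext z; simp
      map_smul' := by intro c x; ext z; simp } with hB1
  set B : V →L[ℝ] V →L[ℝ] W := B1.toContinuousLinearMap with hBdef
  have hBapp : ∀ x y : V, B x y = h x y := by intro x y; simp [hBdef, hB1]
  have hbb : IsBoundedBilinearMap ℝ (fun p : V × V => B p.1 p.2) :=
    B.isBoundedBilinearMap
  -- the curve
  set c : ℝ → V := fun t => Real.cos t • v + Real.sin t • w with hc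
  have hc0 : c 0 = v := by simp [hc]
  have hcd : HasDerivAt c w 0 := by
    have h1 : HasDerivAt (fun t => Real.cos t • v) ((-Real.sin 0) • v) 0 :=
      (Real.hasDerivAt_cos 0).smul_const v
    have h2 : HasDerivAt (fun t => Real.sin t • w) ((Real.cos 0) • w) 0 :=
      (Real.hasDerivAt_sin 0).smul_const w
    have := h1.add h2
    simp only [Real.sin_zero, Real.cos_zero, neg_zero, zero_smul, one_smul, zero_add] at this
    exact this
  -- derivative of t ↦ B (c t) (c t)
  have hpair : HasDerivAt (fun t => (c t, c t)) (w, w) 0 := hcd.prodMk hcd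
  have hfd : HasFDerivAt (fun p : V × V => B p.1 p.2) (hbb.deriv (c 0, c 0)) (c 0, c 0) :=
    hbb.hasFDerivAt _
  have hd : HasDerivAt (fun t => B (c t) (c t)) ((hbb.deriv (c 0, c 0)) (w, w)) 0 :=
    by have := hfd.comp_hasDerivAt 0 hpair; exact this
  have hderval : (hbb.deriv (c 0, c 0)) (w, w) = (2:ℝ) • h v w := by
    rw [hbb.deriv_apply]
    simp [hc0, hBapp, hsym w v, two_smul]
  rw [hderval] at hd
  -- derivative of f
  set f : ℝ → ℝ := fun t => ⟪B (c t) (c t), B (c t) (c t)⟫ with hf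
  have hfd2 : HasDerivAt f (⟪B (c 0) (c 0), (2:ℝ) • h v w⟫ + ⟪(2:ℝ) • h v w, B (c 0) (c 0)⟫) 0 :=
    hd.inner ℝ hd
  have hfdval : HasDerivAt f ((4:ℝ) * ⟪h v v, h v w⟫) 0 := by
    convert hfd2 using 1
    rw [hc0, hBapp]
    rw [real_inner_smul_right, real_inner_smul_left, real_inner_comm (h v w) (h v v)]
    ring
  clear_value B1 B c f
  -- local max
  have hmax' : IsLocalMax f 0 := by
    apply Filter.Eventually.of_forall
    intro t
    have hnorm : ‖c t‖ = 1 := by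
      have h1 : (⟪v, v⟫ : ℝ) = 1 := by rw [real_inner_self_eq_norm_sq, hv]; norm_num
      have h2 : (⟪w, w⟫ : ℝ) = 1 := by rw [real_inner_self_eq_norm_sq, hw]; norm_num
      have h3 : (⟪w, v⟫ : ℝ) = 0 := by rw [real_inner_comm]; exact hvw
      have : ‖c t‖ ^ 2 = 1 := by
        rw [← real_inner_self_eq_norm_sq]
        simp [-inner_self_eq_norm_sq_to_K, hc, inner_add_add_self, real_inner_smul_left, real_inner_smul_right,
          norm_smul, mul_pow, sq_abs, h1, h2, h3, hvw]
        nlinarith [Real.sin_sq_add_cos_sq t]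
      nlinarith [norm_nonneg (c t)]
    have := hmax (c t) hnorm
    have hfe : f t = ‖h (c t) (c t)‖ ^ 2 := by
      rw [hf]; simp only [hBapp]; rw [real_inner_self_eq_norm_sq]
    have hf0 : f 0 = ‖h v v‖ ^ 2 := by
      rw [hf]; simp only [hBapp, hc0]; rw [real_inner_self_eq_norm_sq]
    rw [hfe, hf0]; exact this
  have := hmax'.hasDerivAt_eq_zero hfdval
  linarith [this]

theorem stmt_8 (V W : Type*)
    [NormedAddCommGroup V] [InnerProductSpace ℝ V] [FiniteDimensional ℝ V]
    [NormedAddCommGroup W] [InnerProductSpace ℝ W] [FiniteDimensional ℝ W]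
    (J : V →ₗ[ℝ] V)
    (hJorth : ∀ x y : V, ⟪J x, J y⟫ = ⟪x, y⟫)
    (hJ2 : ∀ x : V, J (J x) = -x)
    (J' : W →ₗ[ℝ] W)
    (hJ'orth : ∀ x y : W, ⟪J' x, J' y⟫ = ⟪x, y⟫)
    (hJ'2 : ∀ x : W, J' (J' x) = -x)
    (h : V →ₗ[ℝ] V →ₗ[ℝ] W)
    (hsym : ∀ X Y : V, h X Y = h Y X)
    (hcomp : ∀ X Y : V, h X (J Y) + h (J X) Y = (2 : ℝ) • J' (h X Y))
    (v : V) (hv : ‖v‖ = 1)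
    (hmax : ∀ w : V, ‖w‖ = 1 → ‖h w w‖ ^ 2 ≤ ‖h v v‖ ^ 2) :
    ∀ w : V, ⟪v, w⟫ = 0 → ⟪h v v, h v w⟫ = 0 := by
  intro w hvw
  by_cases hw0 : w = 0
  · simp [hw0]
  · have hnw : ‖w‖ ≠ 0 := norm_ne_zero_iff.mpr hw0
    set w' : V := ‖w‖⁻¹ • w with hw'
    have hw'1 : ‖w'‖ = 1 := by
      rw [hw', norm_smul]
      simp [hnw]
    have hvw' : ⟪v, w'⟫ = 0 := by
      rw [hw', real_inner_smul_right, hvw, mul_zero]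
    have := aux_key V W h hsym v hv hmax w' hw'1 hvw'
    rw [hw'] at this
    simp only [map_smul, real_inner_smul_right] at this
    rcases mul_eq_zero.mp this with h1 | h1
    · exact absurd h1 (inv_ne_zero hnw)
    · exact h1
end
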